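/- Let G be a weak bicritical graph and let G₁ be a connected component of G with at least 3 vertices. Then every vertex of G₁ has degree at least 2 in G₁. -/

import Mathlib

open SimpleGraph Set

/-- `S` is a dominating set of the induced subgraph of `G` on the vertex set `A`:
`S ⊆ A` and every vertex of `A` is in the closed neighborhood of some vertex of `S`. -/
def IsDomOn {V : Type*} (G : SimpleGraph V) (A S : Set V) : Prop :=
  S ⊆ A ∧ ∀ v ∈ A, ∃ s ∈ S, s = v ∨ G.Adj s v

/-- The domination number of the induced subgraph of `G` on the vertex set `A`. -/
noncomputable def domNumOn {V : Type*} (G : SimpleGraph V) (A : Set V) : ℕ :=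
  sInf {n | ∃ S : Set V, IsDomOn G A S ∧ S.ncard = n}

/-- The domination number of `G`. -/
noncomputable def domNum {V : Type*} (G : SimpleGraph V) : ℕ :=
  domNumOn G Set.univ

/-- `y` is a critical vertex of the induced subgraph of `G` on `A`:
deleting `y` decreases the domination number. -/
def IsCritVertexOn {V : Type*} (G : SimpleGraph V) (A : Set V) (y : V) : Prop :=
  domNumOn G (A \ {y}) < domNumOn G A

/-- The induced subgraph of `G` on `A` is critical: all its vertices are critical. -/
def CriticalOn {V : Type*} (G : SimpleGraph V) (A : Set V) : Prop :=
  ∀ y ∈ A, IsCritVertexOn G A y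

/-- The induced subgraph of `G` on `A` is weak bicritical: no vertex deletion increases the
domination number (`V⁺ = ∅`), and deleting any vertex that keeps the domination number
unchanged (a vertex of `V⁰`) yields a critical graph. -/
def WeakBicriticalOn {V : Type*} (G : SimpleGraph V) (A : Set V) : Prop :=
  (∀ y ∈ A, domNumOn G (A \ {y}) ≤ domNumOn G A) ∧
  (∀ y ∈ A, domNumOn G (A \ {y}) = domNumOn G A → CriticalOn G (A \ {y}))

/-- Let G be a weak bicritical graph and let G₁ be a connected component of G with at
least 3 vertices. Then every vertex of G₁ has degree at least 2 in G₁. -/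
lemma isDomOn_self {V : Type*} (G : SimpleGraph V) (A : Set V) : IsDomOn G A A :=
  ⟨subset_rfl, fun v hv => ⟨v, hv, Or.inl rfl⟩⟩

lemma exists_min_dom {V : Type*} (G : SimpleGraph V) (A : Set V) :
    ∃ S : Set V, IsDomOn G A S ∧ S.ncard = domNumOn G A := by
  have h : domNumOn G A ∈ {n | ∃ S : Set V, IsDomOn G A S ∧ S.ncard = n} :=
    Nat.sInf_mem ⟨A.ncard, A, isDomOn_self G A, rfl⟩
  exact h

lemma domNumOn_le {V : Type*} {G : SimpleGraph V} {A S : Set V} (h : IsDomOn G A S) :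
    domNumOn G A ≤ S.ncard :=
  Nat.sInf_le ⟨S, h, rfl⟩

lemma walk_mem_closed {V : Type*} {G : SimpleGraph V} {S : Set V}
    (hS : ∀ a ∈ S, ∀ b, G.Adj a b → b ∈ S) {a b : V} (p : G.Walk a b) (ha : a ∈ S) :
    b ∈ S := by
  induction p with
  | nil => exact ha
  | cons h p ih => exact ih (hS _ ha _ h)

theorem stmt_4 {V : Type*} [Fintype V] (G : SimpleGraph V)
    (hwb : WeakBicriticalOn G Set.univ) (c : G.ConnectedComponent)
    (hcard : 3 ≤ c.supp.ncard) :
    ∀ v ∈ c.supp, 2 ≤ (G.neighborSet v ∩ c.supp).ncard := by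
  intro v hv
  by_contra hlt
  push_neg at hlt
  have hv' : G.connectedComponentMk v = c := (ConnectedComponent.mem_supp_iff c v).mp hv
  -- all neighbors of v are in the component
  have hsub : G.neighborSet v ⊆ c.supp := by
    intro u hu
    rw [ConnectedComponent.mem_supp_iff, ← hv']
    exact ConnectedComponent.sound ((G.adj_symm hu).reachable)
  rw [Set.inter_eq_self_of_subset_left hsub] at hlt
  -- helper: if S is closed under adjacency and contains v, supp ⊆ S
  have hclosed : ∀ S : Set V, v ∈ S → (∀ a ∈ S, ∀ b, G.Adj a b → b ∈ S) → c.supp ⊆ S := by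
    intro S hvS hS x hx
    have hx' : G.connectedComponentMk x = c := (ConnectedComponent.mem_supp_iff c x).mp hx
    have hr : G.Reachable v x := ConnectedComponent.exact (hv'.trans hx'.symm)
    obtain ⟨p⟩ := hr
    exact walk_mem_closed hS p hvS
  have h1 : (G.neighborSet v).ncard ≤ 1 := by omega
  rcases (Set.ncard_le_one_iff_eq (Set.toFinite _)).mp h1 with hN | ⟨u, hN⟩
  · -- isolated vertex: component is {v}
    have : c.supp ⊆ {v} := by
      refine hclosed {v} rfl ?_
      intro a ha b hab
      rw [Set.mem_singleton_iff] at ha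
      have hb : b ∈ G.neighborSet v := ha ▸ hab
      rw [hN] at hb
      exact absurd hb (Set.notMem_empty b)
    have := Set.ncard_le_ncard this (Set.toFinite _)
    simp only [Set.ncard_singleton] at this
    omega
  · -- leaf with neighbor u
    have hu : G.Adj v u := by
      have : u ∈ G.neighborSet v := by rw [hN]; rfl
      exact this
    have hvneu : v ≠ u := hu.ne
    by_cases hw : ∃ w, G.Adj u w ∧ w ≠ v
    · obtain ⟨w, huw, hwv⟩ := hw
      have hwu : w ≠ u := huw.ne'
      -- Step A : domNumOn G (univ \ {u}) = domNumOn G univ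
      have hle : domNumOn G (Set.univ \ {u}) ≤ domNumOn G Set.univ := hwb.1 u (Set.mem_univ u)
      have hge : domNumOn G Set.univ ≤ domNumOn G (Set.univ \ {u}) := by
        obtain ⟨D, hD, hDc⟩ := exists_min_dom G (Set.univ \ {u})
        have hvmem : v ∈ Set.univ \ {u} := ⟨Set.mem_univ v, hvneu⟩
        have hvD : v ∈ D := by
          obtain ⟨s, hs, hsv⟩ := hD.2 v hvmem
          rcases hsv with rfl | hadj
          · exact hs
          · exfalso
            have : s ∈ G.neighborSet v := hadj.symm
            rw [hN, Set.mem_singleton_iff] at this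
            exact (hD.1 hs).2 this
        have : IsDomOn G Set.univ D := by
          refine ⟨fun x _ => Set.mem_univ x, fun x _ => ?_⟩
          by_cases hxu : x = u
          · exact ⟨v, hvD, Or.inr (hxu ▸ hu)⟩
          · exact hD.2 x ⟨Set.mem_univ x, hxu⟩
        calc domNumOn G Set.univ ≤ D.ncard := domNumOn_le this
          _ = _ := hDc
      have hA : domNumOn G (Set.univ \ {u}) = domNumOn G Set.univ := le_antisymm hle hge
      -- Step B : criticality of w in G - u
      have hcrit := hwb.2 u (Set.mem_univ u) hA w ⟨Set.mem_univ w, hwu⟩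
      rw [IsCritVertexOn, hA] at hcrit
      -- Step C : construct a too-small dominating set of G
      obtain ⟨D, hD, hDc⟩ := exists_min_dom G ((Set.univ \ {u}) \ {w})
      have hDlt : D.ncard < domNumOn G Set.univ := hDc ▸ hcrit
      have hvmem : v ∈ (Set.univ \ {u}) \ {w} := ⟨⟨Set.mem_univ v, hvneu⟩, fun h => hwv h.symm⟩
      have hvD : v ∈ D := by
        obtain ⟨s, hs, hsv⟩ := hD.2 v hvmem
        rcases hsv with rfl | hadj
        · exact hs
        · exfalso
          have : s ∈ G.neighborSet v := hadj.symm
          rw [hN, Set.mem_singleton_iff] at this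
          exact (hD.1 hs).1.2 this
      set D' : Set V := insert u (D \ {v}) with hD'def
      have hdom' : IsDomOn G Set.univ D' := by
        refine ⟨fun x _ => Set.mem_univ x, fun x _ => ?_⟩
        by_cases hxu : x = u
        · exact ⟨u, Set.mem_insert u _, Or.inl hxu.symm⟩
        by_cases hxv : x = v
        · exact ⟨u, Set.mem_insert u _, Or.inr (hxv ▸ hu.symm)⟩
        by_cases hxw : x = w
        · exact ⟨u, Set.mem_insert u _, Or.inr (hxw ▸ huw)⟩
        obtain ⟨s, hs, hsv⟩ := hD.2 x ⟨⟨Set.mem_univ x, hxu⟩, hxw⟩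
        have hsnev : s ≠ v := by
          rintro rfl
          rcases hsv with h | hadj
          · exact hxv h.symm
          · have h2 : x ∈ G.neighborSet _ := hadj
            rw [hN, Set.mem_singleton_iff] at h2
            exact hxu h2
        exact ⟨s, Set.mem_insert_of_mem _ ⟨hs, hsnev⟩, hsv⟩
      have hc1 : D'.ncard ≤ (D \ {v}).ncard + 1 := Set.ncard_insert_le _ _
      have hc2 : (D \ {v}).ncard = D.ncard - 1 :=
        Set.ncard_diff_singleton_of_mem hvD
      have hc3 : 0 < D.ncard := (Set.ncard_pos (Set.toFinite _)).mpr ⟨v, hvD⟩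
      have : domNumOn G Set.univ ≤ D'.ncard := domNumOn_le hdom'
      omega
    · -- u has no other neighbor : component ⊆ {v, u}
      push_neg at hw
      have hsupp : c.supp ⊆ {v, u} := by
        apply hclosed _ (Set.mem_insert v _)
        intro a ha b hab
        rcases ha with rfl | ha
        · have : b ∈ G.neighborSet a := hab
          rw [hN, Set.mem_singleton_iff] at this
          exact Or.inr this
        · rw [Set.mem_singleton_iff] at ha
          subst ha
          exact Or.inl ((hw b hab).symm ▸ rfl)
      have h2 : ({v, u} : Set V).ncard ≤ 2 := by
        calc ({v, u} : Set V).ncard ≤ ({u} : Set V).ncard + 1 := Set.ncard_insert_le _ _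
          _ = 2 := by rw [Set.ncard_singleton]
      have := Set.ncard_le_ncard hsupp (Set.toFinite _)
      omega
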